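/- Let λ be an eigenvalue of a finite real symmetric (or symmetrizable reversible) matrix Q on V with eigenspace N(λ) of dimension ν ≥ 1, and let γ be an involution-like automorphism of the underlying weighted graph exchanging two vertices a and b (γ has finite even order r, preserves the matrix: q(γu, γv) = q(u,v)). Then N(λ) admits a basis f_1, ..., f_ν such that one of the following holds: (I) f_j(a) = f_j(b) = 0 for all j; (II) f_j(a) = f_j(b) = 0 for j ≤ ν−1 and f_ν(a) = f_ν(b) = 1 with f_ν ∘ γ = f_ν; (III) f_j(a) = f_j(b) = 0 for j ≤ ν−1 and f_ν(a) = −f_ν(b) = 1 with f_ν ∘ γ = −f_ν; (IV) f_j(a) = f_j(b) = 0 for j ≤ ν−2, f_ν(a) = f_{ν−1}(b) = 1, f_ν(b) = f_{ν−1}(a) = 0, f_ν ∘ γ = f_{ν−1} and f_{ν−1} ∘ γ = f_ν. -/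

import Mathlib

open Module Submodule Set

set_option linter.unusedSectionVars false
set_option linter.unusedVariables false
set_option maxHeartbeats 1000000
set_option synthInstance.maxHeartbeats 400000

section AuxStmt8

variable {V : Type*} [Fintype V] [DecidableEq V]

private lemma stmt8_memN_iff (Q : Matrix V V ℝ) (lam : ℝ) (f : V → ℝ) :
    f ∈ Module.End.eigenspace (Matrix.toLin' Q) lam ↔ Q.mulVec f = lam • f := by
  rw [Module.End.mem_eigenspace_iff, Matrix.toLin'_apply]

private lemma stmt8_comp_mem (Q : Matrix V V ℝ) (γ : Equiv.Perm V)
    (hγQ : ∀ u v, Q (γ u) (γ v) = Q u v) (lam : ℝ) {f : V → ℝ}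
    (hf : f ∈ Module.End.eigenspace (Matrix.toLin' Q) lam) :
    (fun v => f (γ v)) ∈ Module.End.eigenspace (Matrix.toLin' Q) lam := by
  rw [stmt8_memN_iff] at hf ⊢
  funext u
  have h1 : ∀ w, Q u (γ.symm w) = Q (γ u) w := by
    intro w
    conv_rhs => rw [← Equiv.apply_symm_apply γ w]
    rw [hγQ]
  have : Q.mulVec (fun v => f (γ v)) u = ∑ w, Q (γ u) w * f w := by
    rw [Matrix.mulVec, dotProduct]
    refine Fintype.sum_equiv γ _ _ fun v => ?_
    rw [← h1, Equiv.symm_apply_apply]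
  rw [this]
  have h2 : (∑ w, Q (γ u) w * f w) = Q.mulVec f (γ u) := rfl
  rw [h2, hf]
  simp

private lemma stmt8_sum_shift {M : Type*} [AddCommGroup M] (m : ℕ) (F : ℕ → M)
    (h : F m = F 0) :
    ∑ k ∈ Finset.range m, F (k + 1) = ∑ k ∈ Finset.range m, F k := by
  have h1 := Finset.sum_range_succ' F m
  have h2 := Finset.sum_range_succ F m
  rw [h] at h2
  rw [h1] at h2
  exact add_right_cancel h2

private lemma stmt8_avg (γ : Equiv.Perm V) (a b : V) (hγa : γ a = b) (hγb : γ b = a)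
    (m : ℕ) (hmpos : 0 < m) (hord : γ ^ (2 * m) = 1)
    (N : Submodule ℝ (V → ℝ)) (hstab : ∀ f ∈ N, (fun v => f (γ v)) ∈ N)
    {f : V → ℝ} (hf : f ∈ N) :
    ∃ g, g ∈ N ∧ g a = f a ∧ g b = f b ∧ (∀ v, g (γ (γ v)) = g v) := by
  have hfix : ∀ (x : V), γ (γ x) = x → ∀ k, (γ ^ (2 * k)) x = x := by
    intro x hx k
    induction k with
    | zero => simp
    | succ k ih =>
        have : (2 * (k + 1)) = 2 * k + 2 := by ring
        rw [this, pow_add, Equiv.Perm.mul_apply]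
        have : (γ ^ 2) x = x := by rw [sq, Equiv.Perm.mul_apply, hx]
        rw [this, ih]
  have hfa : ∀ k, (γ ^ (2 * k)) a = a := hfix a (by rw [hγa, hγb])
  have hfb : ∀ k, (γ ^ (2 * k)) b = b := hfix b (by rw [hγb, hγa])
  have hstep : ∀ k v, (γ ^ (2 * (k + 1))) v = (γ ^ (2 * k)) (γ (γ v)) := by
    intro k v
    have h2 : (2 * (k + 1)) = 2 * k + 2 := by ring
    rw [h2, pow_add, Equiv.Perm.mul_apply, sq, Equiv.Perm.mul_apply]
  have hmem : ∀ k, (fun v => f ((γ ^ (2 * k)) v)) ∈ N := by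
    intro k
    induction k with
    | zero => simpa using hf
    | succ k ih =>
        have : (fun v => f ((γ ^ (2 * (k + 1))) v))
            = (fun v => (fun w => (fun x => f ((γ ^ (2 * k)) x)) (γ w)) (γ v)) := by
          funext v; rw [hstep]
        rw [this]
        exact hstab _ (hstab _ ih)
  refine ⟨(m : ℝ)⁻¹ • ∑ k ∈ Finset.range m, (fun v => f ((γ ^ (2 * k)) v)), ?_, ?_, ?_, ?_⟩
  · exact Submodule.smul_mem N _ (Submodule.sum_mem N fun k _ => hmem k)
  · simp only [Pi.smul_apply, Finset.sum_apply, hfa, smul_eq_mul]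
    rw [Finset.sum_const, Finset.card_range, nsmul_eq_mul]
    field_simp
  · simp only [Pi.smul_apply, Finset.sum_apply, hfb, smul_eq_mul]
    rw [Finset.sum_const, Finset.card_range, nsmul_eq_mul]
    field_simp
  · intro v
    simp only [Pi.smul_apply, Finset.sum_apply, smul_eq_mul]
    congr 1
    have : ∀ k, f ((γ ^ (2 * k)) (γ (γ v))) = f ((γ ^ (2 * (k + 1))) v) := by
      intro k; rw [hstep]
    simp only [this]
    exact stmt8_sum_shift m (fun k => f ((γ ^ (2 * k)) v))
      (by show f ((γ ^ (2 * m)) v) = f ((γ ^ (2 * 0)) v); rw [hord]; simp)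

private lemma stmt8_span_eq_of_li {ν : ℕ} (N : Submodule ℝ (V → ℝ)) (hdim : finrank ℝ N = ν)
    (f : Fin ν → V → ℝ) (hmem : ∀ i, f i ∈ N) (hli : LinearIndependent ℝ f) :
    span ℝ (Set.range f) = N := by
  apply Submodule.eq_of_le_of_finrank_le (span_le.mpr (Set.range_subset_iff.mpr hmem))
  rw [finrank_span_eq_card hli, Fintype.card_fin, hdim]

private lemma stmt8_basisK {d : ℕ} (K : Submodule ℝ (V → ℝ)) (hd : finrank ℝ ↥K = d) :
    ∃ v : Fin d → V → ℝ, (∀ i, v i ∈ K) ∧ LinearIndependent ℝ v ∧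
      span ℝ (Set.range v) = K := by
  let B : Basis (Fin d) ℝ ↥K := (Module.finBasis ℝ ↥K).reindex (finCongr (by
    rw [Module.finrank_eq_card_basis (Module.finBasis ℝ ↥K)] at hd
    simpa using hd))
  refine ⟨fun i => ↑(B i), fun i => (B i).2, ?_, ?_⟩
  · exact B.linearIndependent.map' K.subtype (Submodule.ker_subtype K)
  · have : Set.range (fun i => ((B i : V → ℝ))) = K.subtype '' Set.range B := by
      rw [← Set.range_comp]; rfl
    rw [this, ← Submodule.map_span, B.span_eq, Submodule.map_top, Submodule.range_subtype]

private lemma stmt8_snoc_cast {d : ℕ} (v : Fin d → V → ℝ) (u : V → ℝ)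
    (i : Fin (d + 1)) (h : (i : ℕ) < d) :
    (Fin.snoc v u : Fin (d + 1) → V → ℝ) i = v ⟨i, h⟩ := by
  simp [Fin.snoc, h]; rfl

private lemma stmt8_snoc_last' {d : ℕ} (v : Fin d → V → ℝ) (u : V → ℝ)
    (i : Fin (d + 1)) (h : (i : ℕ) = d) :
    (Fin.snoc v u : Fin (d + 1) → V → ℝ) i = u := by
  have hi : i = Fin.last d := Fin.ext (by simpa using h)
  subst hi
  rw [Fin.snoc_last]

private lemma stmt8_build_one {d : ℕ} (N K : Submodule ℝ (V → ℝ)) (a b : V)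
    (hKN : K ≤ N) (hK0 : ∀ x ∈ K, x a = 0 ∧ x b = 0)
    (hdim : finrank ℝ ↥N = d + 1) (hd : finrank ℝ ↥K = d)
    (u : V → ℝ) (hu : u ∈ N) (hua : u a ≠ 0) :
    ∃ f : Fin (d + 1) → V → ℝ, (∀ i, f i ∈ N) ∧ LinearIndependent ℝ f ∧
      span ℝ (Set.range f) = N ∧
      (∀ i : Fin (d + 1), (i : ℕ) < d → f i a = 0 ∧ f i b = 0) ∧
      f (Fin.last d) = u := by
  obtain ⟨v, hvK, hvli, hvspan⟩ := stmt8_basisK K hd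
  have hmem : ∀ i, (Fin.snoc v u : Fin (d + 1) → V → ℝ) i ∈ N := by
    intro i
    by_cases h : (i : ℕ) < d
    · rw [stmt8_snoc_cast v u i h]; exact hKN (hvK _)
    · rw [stmt8_snoc_last' v u i (by have := i.isLt; omega), ]; exact hu
  have hli : LinearIndependent ℝ (Fin.snoc v u : Fin (d + 1) → V → ℝ) := by
    rw [linearIndependent_fin_snoc]
    refine ⟨hvli, fun hmem' => ?_⟩
    rw [hvspan] at hmem'
    exact hua (hK0 u hmem').1
  refine ⟨(Fin.snoc v u : Fin (d + 1) → V → ℝ), hmem, hli,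
    stmt8_span_eq_of_li N hdim _ hmem hli, ?_, Fin.snoc_last ..⟩
  · intro i h
    rw [stmt8_snoc_cast v u i h]
    exact hK0 _ (hvK _)

private lemma stmt8_build_two {d : ℕ} (N K : Submodule ℝ (V → ℝ)) (a b : V)
    (hKN : K ≤ N) (hK0 : ∀ x ∈ K, x a = 0 ∧ x b = 0)
    (hdim : finrank ℝ ↥N = d + 2) (hd : finrank ℝ ↥K = d)
    (u w : V → ℝ) (hu : u ∈ N) (hw : w ∈ N)
    (hua : u a = 1) (hub : u b = 0) (hwa : w a = 0) (hwb : w b = 1) :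
    ∃ f : Fin (d + 2) → V → ℝ, (∀ i, f i ∈ N) ∧ LinearIndependent ℝ f ∧
      span ℝ (Set.range f) = N ∧
      (∀ i : Fin (d + 2), (i : ℕ) < d → f i a = 0 ∧ f i b = 0) ∧
      f (Fin.last (d + 1)) = u ∧ f (Fin.castSucc (Fin.last d)) = w := by
  obtain ⟨v, hvK, hvli, hvspan⟩ := stmt8_basisK K hd
  set v' : Fin (d + 1) → V → ℝ := Fin.snoc v w with hv'
  have hv'li : LinearIndependent ℝ v' := by
    rw [hv', linearIndependent_fin_snoc]
    refine ⟨hvli, fun hmem' => ?_⟩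
    rw [hvspan] at hmem'
    have := (hK0 w hmem').2
    rw [hwb] at this; exact one_ne_zero this
  have hmem : ∀ i, (Fin.snoc v' u : Fin (d + 2) → V → ℝ) i ∈ N := by
    intro i
    by_cases h : (i : ℕ) < d + 1
    · rw [stmt8_snoc_cast v' u i h]
      by_cases h2 : (i : ℕ) < d
      · rw [hv', show (⟨(i : ℕ), h⟩ : Fin (d+1)) = Fin.castSucc ⟨i, h2⟩ from Fin.ext rfl,
          Fin.snoc_castSucc]
        exact hKN (hvK _)
      · rw [hv', show (⟨(i : ℕ), h⟩ : Fin (d+1)) = Fin.last d from Fin.ext (by simp; omega),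
          Fin.snoc_last]
        exact hw
    · rw [stmt8_snoc_last' v' u i (by have := i.isLt; omega)]; exact hu
  have hva : ∀ i, v' i a = 0 := by
    intro i
    by_cases h : (i : ℕ) < d
    · rw [hv', stmt8_snoc_cast v w i h]; exact (hK0 _ (hvK _)).1
    · rw [hv', stmt8_snoc_last' v w i (by have := i.isLt; omega)]; exact hwa
  have hli : LinearIndependent ℝ (Fin.snoc v' u : Fin (d + 2) → V → ℝ) := by
    rw [linearIndependent_fin_snoc]
    refine ⟨hv'li, fun hmem' => ?_⟩
    have hspan_le : span ℝ (Set.range v') ≤ LinearMap.ker (LinearMap.proj a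
        (R := ℝ) (φ := fun _ : V => ℝ)) := by
      rw [span_le]
      rintro x ⟨i, rfl⟩
      simpa using hva i
    have : u a = 0 := hspan_le hmem'
    rw [hua] at this; exact one_ne_zero this
  refine ⟨(Fin.snoc v' u : Fin (d + 2) → V → ℝ), hmem, hli,
    stmt8_span_eq_of_li N hdim _ hmem hli, ?_, Fin.snoc_last .., ?_⟩
  · intro i h
    rw [stmt8_snoc_cast v' u i (by omega), hv',
      show (⟨(i : ℕ), by omega⟩ : Fin (d+1)) = Fin.castSucc ⟨i, h⟩ from Fin.ext rfl,
      Fin.snoc_castSucc]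
    exact hK0 _ (hvK _)
  · rw [show Fin.castSucc (Fin.last d) = (⟨d, by omega⟩ : Fin (d+2)) from Fin.ext rfl]
    rw [stmt8_snoc_cast v' u _ (by simp), hv']
    rw [show (⟨d, by simp⟩ : Fin (d+1)) = Fin.last d from Fin.ext rfl, Fin.snoc_last]

private lemma stmt8_abstract (γ : Equiv.Perm V) (a b : V) (hγa : γ a = b) (hγb : γ b = a)
    (mh : ℕ) (hmh : 0 < mh) (hord2 : γ ^ (2 * mh) = 1)
    (N : Submodule ℝ (V → ℝ)) (hstab : ∀ f ∈ N, (fun v => f (γ v)) ∈ N)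
    (ν : ℕ) (hν : 1 ≤ ν) (hdim : finrank ℝ ↥N = ν) :
    ∃ f : Fin ν → (V → ℝ),
      LinearIndependent ℝ f ∧
      (∀ i, f i ∈ N) ∧
      Submodule.span ℝ (Set.range f) = N ∧
      ((∀ i, f i a = 0 ∧ f i b = 0)
        ∨ ((∀ i : Fin ν, (i : ℕ) + 1 < ν → f i a = 0 ∧ f i b = 0) ∧
            f ⟨ν - 1, by omega⟩ a = 1 ∧ f ⟨ν - 1, by omega⟩ b = 1 ∧
            (∀ v, f ⟨ν - 1, by omega⟩ (γ v) = f ⟨ν - 1, by omega⟩ v))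
        ∨ ((∀ i : Fin ν, (i : ℕ) + 1 < ν → f i a = 0 ∧ f i b = 0) ∧
            f ⟨ν - 1, by omega⟩ a = 1 ∧ f ⟨ν - 1, by omega⟩ b = -1 ∧
            (∀ v, f ⟨ν - 1, by omega⟩ (γ v) = - f ⟨ν - 1, by omega⟩ v))
        ∨ ((∀ i : Fin ν, (i : ℕ) + 2 < ν → f i a = 0 ∧ f i b = 0) ∧
            f ⟨ν - 1, by omega⟩ a = 1 ∧ f ⟨ν - 1, by omega⟩ b = 0 ∧
            f ⟨ν - 2, by omega⟩ b = 1 ∧ f ⟨ν - 2, by omega⟩ a = 0 ∧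
            (∀ v, f ⟨ν - 1, by omega⟩ (γ v) = f ⟨ν - 2, by omega⟩ v) ∧
            (∀ v, f ⟨ν - 2, by omega⟩ (γ v) = f ⟨ν - 1, by omega⟩ v))) := by
  classical
  let φ : ↥N →ₗ[ℝ] ℝ × ℝ :=
    LinearMap.prod ((LinearMap.proj a).comp N.subtype) ((LinearMap.proj b).comp N.subtype)
  have hφ : ∀ x : ↥N, φ x = ((x : V → ℝ) a, (x : V → ℝ) b) := fun x => rfl
  obtain ⟨K, hKN, hK0, hdK⟩ : ∃ K : Submodule ℝ (V → ℝ), K ≤ N ∧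
      (∀ x ∈ K, x a = 0 ∧ x b = 0) ∧ finrank ℝ ↥K = finrank ℝ ↥(LinearMap.ker φ) := by
    refine ⟨Submodule.map N.subtype (LinearMap.ker φ), Submodule.map_subtype_le _ _, ?_, ?_⟩
    · intro x hx
      rw [Submodule.mem_map] at hx
      obtain ⟨y, hy, rfl⟩ := hx
      rw [LinearMap.mem_ker] at hy
      have hyy := hφ y
      rw [hy, eq_comm, Prod.mk_eq_zero] at hyy
      exact hyy
    · exact (Submodule.equivMapOfInjective N.subtype (Submodule.injective_subtype N)
        (LinearMap.ker φ)).symm.finrank_eq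
  have hrn : finrank ℝ ↥(LinearMap.range φ) + finrank ℝ ↥(LinearMap.ker φ)
      = finrank ℝ ↥N := LinearMap.finrank_range_add_finrank_ker φ
  have hrange2 : finrank ℝ ↥(LinearMap.range φ) ≤ 2 := by
    have h := Submodule.finrank_le (LinearMap.range φ)
    simpa using h
  set d := finrank ℝ ↥K with hd
  rcases show finrank ℝ ↥(LinearMap.range φ) = 0 ∨ finrank ℝ ↥(LinearMap.range φ) = 1 ∨
      finrank ℝ ↥(LinearMap.range φ) = 2 by omega with h0 | h1 | h2
  · -- Case I
    have hbot : LinearMap.range φ = ⊥ := Submodule.finrank_eq_zero.mp h0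
    have hz : ∀ x : ↥N, (x : V → ℝ) a = 0 ∧ (x : V → ℝ) b = 0 := by
      intro x
      have hx : φ x = 0 := by
        have h := LinearMap.mem_range_self φ x
        rwa [hbot, Submodule.mem_bot] at h
      rw [hφ, Prod.mk_eq_zero] at hx
      exact hx
    obtain ⟨f, hfN, hfli, hfspan⟩ := stmt8_basisK N hdim
    exact ⟨f, hfli, hfN, hfspan, Or.inl fun i => hz ⟨f i, hfN i⟩⟩
  · -- Cases II / III
    have hν2 : ν = d + 1 := by omega
    subst hν2
    obtain ⟨f0, hf0N, hab0⟩ : ∃ f0, f0 ∈ N ∧ ¬(f0 a = 0 ∧ f0 b = 0) := by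
      by_contra h
      push_neg at h
      have hφ0 : LinearMap.range φ = ⊥ := by
        rw [LinearMap.range_eq_bot]
        apply LinearMap.ext
        intro x
        have hx := h (x : V → ℝ) x.2
        rw [hφ]
        simp only [LinearMap.zero_apply, Prod.mk_eq_zero]
        exact hx
      rw [hφ0, finrank_bot] at h1
      omega
    obtain ⟨g, hgN, hga, hgb, hgγ⟩ := stmt8_avg γ a b hγa hγb mh hmh hord2 N hstab hf0N
    have hhN : (fun v => g (γ v)) ∈ N := hstab g hgN
    have hha : g (γ a) = f0 b := by rw [hγa, hgb]
    have hhb : g (γ b) = f0 a := by rw [hγb, hga]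
    rcases eq_or_ne (f0 a + f0 b) 0 with hs | hs
    · -- Case III
      have hta : f0 a ≠ 0 := by
        intro h
        exact hab0 ⟨h, by linarith⟩
      have ht : f0 a - f0 b ≠ 0 := by
        intro h
        apply hta
        linarith
      obtain ⟨u, huN, hua, hub, huγ⟩ :
          ∃ u, u ∈ N ∧ u a = 1 ∧ u b = -1 ∧ ∀ v, u (γ v) = -u v := by
        refine ⟨(f0 a - f0 b)⁻¹ • (g - fun v => g (γ v)),
          Submodule.smul_mem N _ (Submodule.sub_mem N hgN hhN), ?_, ?_, ?_⟩
        · simp only [Pi.smul_apply, Pi.sub_apply, smul_eq_mul]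
          rw [hga, hha]; field_simp
        · simp only [Pi.smul_apply, Pi.sub_apply, smul_eq_mul]
          rw [hgb, hhb]; field_simp; ring
        · intro v
          simp only [Pi.smul_apply, Pi.sub_apply, smul_eq_mul]
          rw [hgγ v]; ring
      obtain ⟨f, hfN, hfli, hfspan, hf0, hflast⟩ :=
        stmt8_build_one N K a b hKN hK0 hdim rfl u huN (by rw [hua]; norm_num)
      have hidx : (⟨d + 1 - 1, by omega⟩ : Fin (d + 1)) = Fin.last d := Fin.ext (by simp)
      refine ⟨f, hfli, hfN, hfspan, Or.inr (Or.inr (Or.inl ?_))⟩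
      rw [hidx, hflast]
      exact ⟨fun i hi => hf0 i (by omega), hua, hub, huγ⟩
    · -- Case II
      obtain ⟨u, huN, hua, hub, huγ⟩ :
          ∃ u, u ∈ N ∧ u a = 1 ∧ u b = 1 ∧ ∀ v, u (γ v) = u v := by
        refine ⟨(f0 a + f0 b)⁻¹ • (g + fun v => g (γ v)),
          Submodule.smul_mem N _ (Submodule.add_mem N hgN hhN), ?_, ?_, ?_⟩
        · simp only [Pi.smul_apply, Pi.add_apply, smul_eq_mul]
          rw [hga, hha]; field_simp
        · simp only [Pi.smul_apply, Pi.add_apply, smul_eq_mul]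
          rw [hgb, hhb]; field_simp; ring
        · intro v
          simp only [Pi.smul_apply, Pi.add_apply, smul_eq_mul]
          rw [hgγ v]; ring
      obtain ⟨f, hfN, hfli, hfspan, hf0, hflast⟩ :=
        stmt8_build_one N K a b hKN hK0 hdim rfl u huN (by rw [hua]; norm_num)
      have hidx : (⟨d + 1 - 1, by omega⟩ : Fin (d + 1)) = Fin.last d := Fin.ext (by simp)
      refine ⟨f, hfli, hfN, hfspan, Or.inr (Or.inl ?_)⟩
      rw [hidx, hflast]
      exact ⟨fun i hi => hf0 i (by omega), hua, hub, huγ⟩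
  · -- Case IV
    have hν2 : ν = d + 2 := by omega
    subst hν2
    obtain ⟨f0, hf0N, hxa, hxb⟩ : ∃ f0, f0 ∈ N ∧ f0 a = 1 ∧ f0 b = 0 := by
      have htop : LinearMap.range φ = ⊤ := by
        apply Submodule.eq_top_of_finrank_eq
        rw [h2]; simp
      have hmem : ((1 : ℝ), (0 : ℝ)) ∈ LinearMap.range φ := by rw [htop]; trivial
      obtain ⟨x, hx⟩ := hmem
      rw [hφ] at hx
      exact ⟨(x : V → ℝ), x.2, (Prod.mk.injEq _ _ _ _).mp hx |>.1,
        (Prod.mk.injEq _ _ _ _).mp hx |>.2⟩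
    obtain ⟨g, hgN, hga, hgb, hgγ⟩ := stmt8_avg γ a b hγa hγb mh hmh hord2 N hstab hf0N
    rw [hxa] at hga
    rw [hxb] at hgb
    have hhN : (fun v => g (γ v)) ∈ N := hstab g hgN
    have hha : g (γ a) = 0 := by rw [hγa, hgb]
    have hhb : g (γ b) = 1 := by rw [hγb, hga]
    obtain ⟨f, hfN, hfli, hfspan, hf0, hflast, hfcast⟩ :=
      stmt8_build_two N K a b hKN hK0 hdim rfl g (fun v => g (γ v)) hgN hhN hga hgb hha hhb
    have hidx1 : (⟨d + 2 - 1, by omega⟩ : Fin (d + 2)) = Fin.last (d + 1) := Fin.ext (by simp)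
    have hidx2 : (⟨d + 2 - 2, by omega⟩ : Fin (d + 2)) = Fin.castSucc (Fin.last d) :=
      Fin.ext (by simp)
    refine ⟨f, hfli, hfN, hfspan, Or.inr (Or.inr (Or.inr ?_))⟩
    rw [hidx1, hidx2, hflast, hfcast]
    exact ⟨fun i hi => hf0 i (by omega), hga, hgb, hhb, hha, fun v => rfl, fun v => hgγ v⟩

end AuxStmt8

theorem stmt8 {V : Type*} [Fintype V] [DecidableEq V]
    (Q : Matrix V V ℝ)
    (m : V → ℝ) (hm : ∀ v, 0 < m v)
    (hrev : ∀ u v, m u * Q u v = m v * Q v u)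
    (a b : V) (hab : a ≠ b)
    (γ : Equiv.Perm V) (hγQ : ∀ u v, Q (γ u) (γ v) = Q u v)
    (hγm : ∀ u, m (γ u) = m u) (hγa : γ a = b) (hγb : γ b = a)
    (r : ℕ) (hrpos : 0 < r) (hreven : Even r) (hord : γ ^ r = 1)
    (lam : ℝ) (ν : ℕ) (hν : 1 ≤ ν)
    (hdim : Module.finrank ℝ
        ↥(Module.End.eigenspace (Matrix.toLin' Q) lam) = ν) :
    ∃ f : Fin ν → (V → ℝ),
      LinearIndependent ℝ f ∧
      (∀ i, Q.mulVec (f i) = lam • f i) ∧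
      Submodule.span ℝ (Set.range f)
        = Module.End.eigenspace (Matrix.toLin' Q) lam ∧
      ((∀ i, f i a = 0 ∧ f i b = 0)
        ∨ ((∀ i : Fin ν, (i : ℕ) + 1 < ν → f i a = 0 ∧ f i b = 0) ∧
            f ⟨ν - 1, by omega⟩ a = 1 ∧ f ⟨ν - 1, by omega⟩ b = 1 ∧
            (∀ v, f ⟨ν - 1, by omega⟩ (γ v) = f ⟨ν - 1, by omega⟩ v))
        ∨ ((∀ i : Fin ν, (i : ℕ) + 1 < ν → f i a = 0 ∧ f i b = 0) ∧
            f ⟨ν - 1, by omega⟩ a = 1 ∧ f ⟨ν - 1, by omega⟩ b = -1 ∧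
            (∀ v, f ⟨ν - 1, by omega⟩ (γ v) = - f ⟨ν - 1, by omega⟩ v))
        ∨ ((∀ i : Fin ν, (i : ℕ) + 2 < ν → f i a = 0 ∧ f i b = 0) ∧
            f ⟨ν - 1, by omega⟩ a = 1 ∧ f ⟨ν - 1, by omega⟩ b = 0 ∧
            f ⟨ν - 2, by omega⟩ b = 1 ∧ f ⟨ν - 2, by omega⟩ a = 0 ∧
            (∀ v, f ⟨ν - 1, by omega⟩ (γ v) = f ⟨ν - 2, by omega⟩ v) ∧
            (∀ v, f ⟨ν - 2, by omega⟩ (γ v) = f ⟨ν - 1, by omega⟩ v))) := by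
  obtain ⟨mh, hmh⟩ := hreven
  have hmhpos : 0 < mh := by omega
  have hord2 : γ ^ (2 * mh) = 1 := by rw [show 2 * mh = r by omega]; exact hord
  obtain ⟨f, hfli, hfN, hfspan, hcases⟩ := stmt8_abstract γ a b hγa hγb mh hmhpos hord2
    (Module.End.eigenspace (Matrix.toLin' Q) lam)
    (fun f hf => stmt8_comp_mem Q γ hγQ lam hf) ν hν hdim
  exact ⟨f, hfli, fun i => (stmt8_memN_iff Q lam (f i)).mp (hfN i), hfspan, hcases⟩
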